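/- Let R and S be strings as in the context, with insert points ip, matching-factor lengths ℓ, mismatch characters c, and flags x. For positions 1 ≤ i, j ≤ |S| with ip(i) = ip(j): if ℓ_i < ℓ_j and x_i = L, then the suffix S[j..] is lexicographically smaller than the suffix S[i..]. -/

import Mathlib

/-- The flag associated with a position of `S`: `S` = smaller, `L` = larger. -/
inductive MSFlag
  | S
  | L


theorem lex_of_take_eq {α : Type*} [LinearOrder α] :
    ∀ (n : ℕ) (l₁ l₂ : List α), l₁.take n = l₂.take n →
    ∀ (h₁ : n < l₁.length) (h₂ : n < l₂.length), l₁[n] < l₂[n] →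
    List.Lex (· < ·) l₁ l₂
  | 0, a :: _, b :: _, _, _, _, hlt => List.Lex.rel hlt
  | n+1, a :: t₁, b :: t₂, ht, h₁, h₂, hlt => by
      simp only [List.take_succ_cons, List.cons.injEq] at ht
      rw [ht.1]
      exact List.Lex.cons (lex_of_take_eq n t₁ t₂ ht.2 (by simpa using h₁) (by simpa using h₂)
        (by simpa using hlt))

/-- if `ip i = ip j`, `ℓ i < ℓ j` and `x i = L`, then `S.drop j` is lexicographically smaller than `S.drop i`. -/
theorem same_ip_len_lt_flag_L_implies_suffix_gt {α : Type*} [LinearOrder α]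
    (R S : List α) (hash dollar : α)
    (SA : ℕ → ℕ) (ℓ : ℕ → ℕ) (c : ℕ → α) (ip : ℕ → ℕ) (x : ℕ → MSFlag)
    -- sentinel/context hypotheses
    (hRne : R ≠ []) (hSne : S ≠ [])
    (hRlast : R[R.length - 1]? = some hash)
    (hRhash : ∀ m, R[m]? = some hash → m = R.length - 1)
    (hSlast : S[S.length - 1]? = some dollar)
    (hSdollar : ∀ m, S[m]? = some dollar → m = S.length - 1)
    (hhd : hash < dollar)
    (hhashmin : ∀ a, (a ∈ R ∨ a ∈ S) → a ≠ hash → hash < a)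
    (hdollarmin : ∀ a, (a ∈ R ∨ a ∈ S) → a ≠ hash → a ≠ dollar → dollar < a)
    (hSinR : ∀ a ∈ S, a ≠ dollar → a ∈ R)
    (hdnotR : dollar ∉ R)
    -- suffix array of R (0-based ranks and positions)
    (hSAran : ∀ k < R.length, SA k < R.length)
    (hSAsurj : ∀ m < R.length, ∃ k < R.length, SA k = m)
    (hSAmono : ∀ k₁ k₂, k₁ < k₂ → k₂ < R.length →
      List.Lex (· < ·) (R.drop (SA k₁)) (R.drop (SA k₂)))
    -- matching statistics: U i = (S.drop i).take (ℓ i) is the longest prefix of the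
    -- suffix S.drop i occurring as a substring of R; c i = S[i + ℓ i] is the mismatch character
    (hUlen : ∀ i < S.length, ℓ i ≤ S.length - i)
    (hUocc : ∀ i < S.length, (S.drop i).take (ℓ i) <:+: R)
    (hUmax : ∀ i < S.length, ∀ m, m ≤ S.length - i → (S.drop i).take m <:+: R → m ≤ ℓ i)
    (hc : ∀ i < S.length, S[i + ℓ i]? = some (c i))
    -- insert point
    (hip0 : ∀ i < S.length, ℓ i = 0 → ip i = 0)
    (hipmax : ∀ i < S.length, 0 < ℓ i →
      {k | k < R.length ∧ (S.drop i).take (ℓ i) <+: R.drop (SA k) ∧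
        List.Lex (· < ·) (R.drop (SA k)) ((S.drop i).take (ℓ i) ++ [c i])}.Nonempty →
      IsGreatest {k | k < R.length ∧ (S.drop i).take (ℓ i) <+: R.drop (SA k) ∧
        List.Lex (· < ·) (R.drop (SA k)) ((S.drop i).take (ℓ i) ++ [c i])} (ip i))
    (hipmin : ∀ i < S.length, 0 < ℓ i →
      ¬ {k | k < R.length ∧ (S.drop i).take (ℓ i) <+: R.drop (SA k) ∧
        List.Lex (· < ·) (R.drop (SA k)) ((S.drop i).take (ℓ i) ++ [c i])}.Nonempty →
      IsLeast {k | k < R.length ∧ (S.drop i).take (ℓ i) <+: R.drop (SA k)} (ip i))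
    -- the flag x: x i = MSFlag.S iff c i < R[SA (ip i) + ℓ i], and x i = MSFlag.L otherwise
    (hqran : ∀ i < S.length, SA (ip i) + ℓ i < R.length)
    (hx : ∀ i < S.length, (x i = MSFlag.S ↔ ∃ a, R[SA (ip i) + ℓ i]? = some a ∧ c i < a))
    (i j : ℕ) (hi : i < S.length) (hj : j < S.length)
    (hipeq : ip i = ip j) (hlen : ℓ i < ℓ j) (hxi : x i = MSFlag.L) :
    List.Lex (· < ·) (S.drop j) (S.drop i) := by
  set q := SA (ip i) with hq
  -- basic bounds
  have hiℓ : i + ℓ i < S.length := by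
    obtain ⟨h, -⟩ := List.getElem?_eq_some_iff.mp (hc i hi); exact h
  have hqi : q + ℓ i < R.length := hqran i hi
  have hℓj : 0 < ℓ j := Nat.lt_of_le_of_lt (Nat.zero_le _) hlen
  -- U_i is a prefix of R.drop q
  have hUi_pre : (S.drop i).take (ℓ i) <+: R.drop q := by
    rcases Nat.eq_zero_or_pos (ℓ i) with h0 | h0
    · simp [h0]
    · by_cases hne : {k | k < R.length ∧ (S.drop i).take (ℓ i) <+: R.drop (SA k) ∧
        List.Lex (· < ·) (R.drop (SA k)) ((S.drop i).take (ℓ i) ++ [c i])}.Nonempty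
      · exact ((hipmax i hi h0 hne).1).2.1
      · exact ((hipmin i hi h0 hne).1).2
  have hUj_pre : (S.drop j).take (ℓ j) <+: R.drop q := by
    rw [hq, hipeq]
    by_cases hne : {k | k < R.length ∧ (S.drop j).take (ℓ j) <+: R.drop (SA k) ∧
        List.Lex (· < ·) (R.drop (SA k)) ((S.drop j).take (ℓ j) ++ [c j])}.Nonempty
    · exact ((hipmax j hj hℓj hne).1).2.1
    · exact ((hipmin j hj hℓj hne).1).2
  have lenUi : ((S.drop i).take (ℓ i)).length = ℓ i := by
    simp [List.length_take, List.length_drop]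
    omega
  have lenUj : ((S.drop j).take (ℓ j)).length = ℓ j := by
    have := hUlen j hj
    simp [List.length_take, List.length_drop]
    omega
  have hUi_eq : (S.drop i).take (ℓ i) = (R.drop q).take (ℓ i) := by
    have := List.prefix_iff_eq_take.mp hUi_pre; rwa [lenUi] at this
  have hUj_eq : (S.drop j).take (ℓ j) = (R.drop q).take (ℓ j) := by
    have := List.prefix_iff_eq_take.mp hUj_pre; rwa [lenUj] at this
  have htakes : (S.drop j).take (ℓ i) = (S.drop i).take (ℓ i) := by
    have h1 : (S.drop j).take (ℓ i) = ((S.drop j).take (ℓ j)).take (ℓ i) := by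
      rw [List.take_take, Nat.min_eq_left (le_of_lt hlen)]
    rw [h1, hUj_eq, List.take_take, Nat.min_eq_left (le_of_lt hlen), hUi_eq]
  have hjdlen : ℓ i < (S.drop j).length := by
    have := hUlen j hj
    simp [List.length_drop]; omega
  have hidlen : ℓ i < (S.drop i).length := by
    simp [List.length_drop]; omega
  have hrdlen : ℓ i < (R.drop q).length := by
    simp [List.length_drop]; omega
  -- values at position ℓ i
  have hci : (S.drop i)[ℓ i]'hidlen = c i := by
    obtain ⟨h, he⟩ := List.getElem?_eq_some_iff.mp (hc i hi)
    rw [List.getElem_drop]; exact he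
  have hRj : (S.drop j)[ℓ i]'hjdlen = R[q + ℓ i]'hqi := by
    have h1 : (S.drop j)[ℓ i]'hjdlen = ((S.drop j).take (ℓ j))[ℓ i]'(by rw [lenUj]; exact hlen) :=
      List.getElem_take.symm
    rw [h1]
    exact (List.getElem_of_eq hUj_eq _).trans (List.getElem_take.trans List.getElem_drop)
  -- the flag x i = L gives R[q + ℓ i] ≤ c i
  have hle : R[q + ℓ i]'hqi ≤ c i := by
    by_contra hlt
    push_neg at hlt
    have : x i = MSFlag.S := (hx i hi).mpr ⟨R[q + ℓ i]'hqi,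
      List.getElem?_eq_some_iff.mpr ⟨hqi, rfl⟩, hlt⟩
    rw [hxi] at this; exact MSFlag.noConfusion this
  -- strictness: equality would contradict maximality of ℓ i
  have hne : R[q + ℓ i]'hqi ≠ c i := by
    intro heq
    have hext : (S.drop i).take (ℓ i + 1) = (R.drop q).take (ℓ i + 1) := by
      apply List.ext_getElem
      · simp [List.length_take, List.length_drop]; omega
      · intro n h₁ h₂
        rw [List.getElem_take, List.getElem_take]
        have hn : n < ℓ i + 1 := by simp [List.length_take] at h₁; omega
        rcases Nat.lt_or_ge n (ℓ i) with hn' | hn'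
        · have e1 : (S.drop i)[n]'(by omega) = ((S.drop i).take (ℓ i))[n]'(by rw [lenUi]; omega) :=
            List.getElem_take.symm
          exact e1.trans ((List.getElem_of_eq hUi_eq _).trans List.getElem_take)
        · have : n = ℓ i := by omega
          subst this
          rw [hci, List.getElem_drop]
          exact heq.symm
    have hinf : (S.drop i).take (ℓ i + 1) <:+: R := by
      rw [hext]
      exact (List.take_prefix _ _).isInfix.trans (List.drop_suffix q R).isInfix
    have := hUmax i hi (ℓ i + 1) (by omega) hinf
    omega
  have hlt : (S.drop j)[ℓ i]'hjdlen < (S.drop i)[ℓ i]'hidlen := by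
    rw [hRj, hci]; exact lt_of_le_of_ne hle hne
  exact lex_of_take_eq (ℓ i) _ _ htakes hjdlen hidlen hlt
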